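/- arXiv:2404.19422 — 5 statements merged into one kernel-verified Lean document; each statement's English description precedes it below -/
import Mathlib

section
/- If there exists a time-respecting path from vertex s to vertex z that departs at time t and goes through route r, then there exists a useful dominating path from s to z that departs at time t and goes through route r. -/
/-- A temporal edge with tail, head, departure time and arrival time. -/
structure TEdge (V : Type) where
  tail : V
  head : V
  dep : ℕ
  arr : ℕ

/-- A temporal graph: a set of temporal edges, each with arrival strictly after departure. -/
structure TGraph (V : Type) where
  edges : Set (TEdge V)
  valid : ∀ e ∈ edges, e.dep < e.arr

variable {V : Type}

/-- Time-respecting path: nonempty sequence of edges of `G`, consecutive edges share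
endpoints and each edge departs no earlier than the previous edge arrives. -/
def TRP (G : TGraph V) (p : List (TEdge V)) : Prop :=
  p ≠ [] ∧ (∀ e ∈ p, e ∈ G.edges) ∧
    List.Chain' (fun e f => e.head = f.tail ∧ e.arr ≤ f.dep) p

/-- Departure time of a path (departure of its first edge). -/
def pdep (p : List (TEdge V)) : ℕ := (p.head?.elim 0 TEdge.dep)

/-- Arrival time of a path (arrival of its last edge). -/
def parr (p : List (TEdge V)) : ℕ := (p.getLast?.elim 0 TEdge.arr)

/-- Start vertex of a path. -/
def startV (p : List (TEdge V)) : Option V := p.head?.map TEdge.tail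

/-- End vertex of a path. -/
def endV (p : List (TEdge V)) : Option V := p.getLast?.map TEdge.head

/-- The route (sequence of vertices) a path goes through. -/
def routeOf (p : List (TEdge V)) : List V :=
  p.map TEdge.tail ++ (p.getLast?.elim [] fun e => [e.head])

/-- `ℙ(s,z,r,t)`: time-respecting paths from `s` to `z` through route `r` departing at `t`. -/
def PathsIn (G : TGraph V) (s z : V) (r : List V) (t : ℕ) : Set (List (TEdge V)) :=
  {p | TRP G p ∧ startV p = some s ∧ endV p = some z ∧ routeOf p = r ∧ pdep p = t}

/-- Dominating path in `ℙ(s,z,r,t)`. -/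
def DominatingIn (G : TGraph V) (s z : V) (r : List V) (t : ℕ) (p : List (TEdge V)) : Prop :=
  p ∈ PathsIn G s z r t ∧ ∀ q ∈ PathsIn G s z r t, parr p ≤ parr q

/-- A path is dominating with respect to its own start vertex, route and departure time. -/
def DomSelf (G : TGraph V) (p : List (TEdge V)) : Prop :=
  TRP G p ∧ ∀ q, TRP G q → startV q = startV p → routeOf q = routeOf p →
    pdep q = pdep p → parr p ≤ parr q

/-- Useful dominating path: every (nonempty) prefix is dominating on its own route
and departure time. -/
def UsefulDom (G : TGraph V) (p : List (TEdge V)) : Prop :=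
  ∀ j, 1 ≤ j → j ≤ p.length → DomSelf G (p.take j)

/-- The edge relation of the edge-scan-dependency graph: `v_e → v_f` iff `f` departs
from the head of `e` no earlier than `e` arrives and no parallel edge with the same
endpoints departs no earlier than `arr e` and arrives strictly before `f`. -/
def ESDGAdj (G : TGraph V) (e f : TEdge V) : Prop :=
  e ∈ G.edges ∧ f ∈ G.edges ∧ e.head = f.tail ∧ e.arr ≤ f.dep ∧
    ¬ ∃ g ∈ G.edges, g.tail = f.tail ∧ g.head = f.head ∧ e.arr ≤ g.dep ∧ g.arr < f.arr

/-- A directed path in the ESDG, given as the corresponding sequence of temporal edges. -/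
def ESDGPath (G : TGraph V) (p : List (TEdge V)) : Prop :=
  p ≠ [] ∧ (∀ e ∈ p, e ∈ G.edges) ∧ List.Chain' (ESDGAdj G) p

/-- Earliest arrival path from `s` to `z` with ready time `rt`. -/
def EAPath (G : TGraph V) (s z : V) (rt : ℕ) (p : List (TEdge V)) : Prop :=
  TRP G p ∧ startV p = some s ∧ endV p = some z ∧ rt ≤ pdep p ∧
    ∀ q, TRP G q → startV q = some s → endV q = some z → rt ≤ pdep q → parr p ≤ parr q

/-- Fastest path from `s` to `z`: minimizes journey time `arr - dep`. -/
def FastestPath (G : TGraph V) (s z : V) (p : List (TEdge V)) : Prop :=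
  TRP G p ∧ startV p = some s ∧ endV p = some z ∧
    ∀ q, TRP G q → startV q = some s → endV q = some z →
      parr p - pdep p ≤ parr q - pdep q

lemma routeOf_concat (xs : List (TEdge V)) (e : TEdge V) :
    routeOf (xs ++ [e]) = xs.map TEdge.tail ++ [e.tail, e.head] := by
  simp [routeOf]

lemma parr_concat (xs : List (TEdge V)) (e : TEdge V) :
    parr (xs ++ [e]) = e.arr := by simp [parr]

lemma pdep_concat (xs : List (TEdge V)) (e : TEdge V) (h : xs ≠ []) :
    pdep (xs ++ [e]) = pdep xs := by
  cases xs with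
  | nil => exact absurd rfl h
  | cons a l => simp [pdep]

lemma parr_getLast (p : List (TEdge V)) (h : p ≠ []) :
    parr p = (p.getLast h).arr := by
  simp [parr, List.getLast?_eq_getLast h]

lemma routeOf_ne (p : List (TEdge V)) (h : p ≠ []) :
    routeOf p = p.map TEdge.tail ++ [(p.getLast h).head] := by
  simp [routeOf, List.getLast?_eq_getLast h]

lemma startV_route (p : List (TEdge V)) : startV p = (routeOf p).head? := by
  cases p with
  | nil => simp [startV, routeOf]
  | cons a l => simp [startV, routeOf]

lemma endV_route (p : List (TEdge V)) : endV p = (routeOf p).getLast? := by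
  rcases List.eq_nil_or_concat p with rfl | ⟨xs, e, rfl⟩
  · simp [endV, routeOf]
  · simp [endV, routeOf_concat]

lemma route_eq_parts {p q : List (TEdge V)} (hp : p ≠ []) (hq : q ≠ [])
    (h : routeOf p = routeOf q) :
    p.map TEdge.tail = q.map TEdge.tail ∧ (p.getLast hp).head = (q.getLast hq).head := by
  rw [routeOf_ne p hp, routeOf_ne q hq] at h
  obtain ⟨h1, h2⟩ := List.append_inj' h (by simp)
  exact ⟨h1, by simpa using h2⟩

lemma chain'_concat_rel {α : Type*} {R : α → α → Prop} {xs : List α} {g : α}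
    (h : List.Chain' R (xs ++ [g])) (hx : xs ≠ []) : R (xs.getLast hx) g := by
  obtain ⟨-, -, h3⟩ := List.isChain_append.mp h
  exact h3 _ (by rw [List.getLast?_eq_getLast hx]; rfl) g rfl

lemma exists_useful (G : TGraph V) :
    ∀ p : List (TEdge V), TRP G p →
      ∃ Q, TRP G Q ∧ routeOf Q = routeOf p ∧ pdep Q = pdep p ∧
        parr Q ≤ parr p ∧ UsefulDom G Q := by
  intro p
  induction p using List.reverseRecOn with
  | nil => intro h; exact absurd rfl h.1
  | append_singleton p' e ih =>
    intro hp
    rcases eq_or_ne p' [] with rfl | hne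
    · -- base case: single edge
      simp only [List.nil_append] at *
      have he : e ∈ G.edges := hp.2.1 e (by simp)
      set S : Set ℕ :=
        {n | ∃ f, f ∈ G.edges ∧ f.tail = e.tail ∧ f.head = e.head ∧ f.dep = e.dep ∧ f.arr = n}
        with hSdef
      have heS : e.arr ∈ S := ⟨e, he, rfl, rfl, rfl, rfl⟩
      obtain ⟨f, hfG, hft, hfh, hfd, hfa⟩ := Nat.sInf_mem (⟨_, heS⟩ : S.Nonempty)
      have hfle : ∀ n ∈ S, f.arr ≤ n := fun n hn => hfa ▸ Nat.sInf_le hn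
      have hQtrp : TRP G [f] := ⟨by simp, by simpa using hfG, List.isChain_singleton f⟩
      refine ⟨[f], hQtrp, ?_, ?_, ?_, ?_⟩
      · simp [routeOf, hft, hfh]
      · simp [pdep, hfd]
      · simpa [parr] using hfle _ heS
      · intro j hj1 hj2
        simp only [List.length_singleton] at hj2
        have hj : j = 1 := le_antisymm hj2 hj1
        subst hj
        show DomSelf G [f]
        refine ⟨hQtrp, ?_⟩
        intro q hq hsq hrq hdq
        obtain ⟨xs, g, rfl⟩ := (List.eq_nil_or_concat q).resolve_left hq.1
        simp only [List.concat_eq_append] at *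
        rw [routeOf_concat] at hrq
        have hroutef : routeOf [f] = [f.tail, f.head] := by simp [routeOf]
        rw [hroutef] at hrq
        have hxs : xs = [] := by
          have := congrArg List.length hrq
          simpa using this
        subst hxs
        simp only [List.nil_append, List.map_nil] at hrq
        have hgt : g.tail = f.tail := by simpa using congrArg List.head? hrq
        have hgh : g.head = f.head := by
          have := congrArg (fun l => l.getLast?) hrq
          simpa using this
        have hgd : g.dep = f.dep := by simpa [pdep] using hdq
        have hgS : g.arr ∈ S :=
          ⟨g, hq.2.1 g (by simp), by rw [hgt, hft], by rw [hgh, hfh],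
            by rw [hgd, hfd], rfl⟩
        simpa [parr] using hfle _ hgS
    · -- inductive step
      have hchain := hp.2.2
      have hchain' := List.isChain_append.mp hchain
      have hp'trp : TRP G p' :=
        ⟨hne, fun x hx => hp.2.1 x (List.mem_append_left _ hx), hchain'.1⟩
      have hlaste : (p'.getLast hne).head = e.tail ∧ (p'.getLast hne).arr ≤ e.dep :=
        chain'_concat_rel hchain hne
      have hparrp' : parr p' ≤ e.dep := by rw [parr_getLast p' hne]; exact hlaste.2
      obtain ⟨Q', hQ'trp, hQ'route, hQ'dep, hQ'arr, hQ'use⟩ := ih hp'trp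
      have hQ'ne : Q' ≠ [] := hQ'trp.1
      obtain ⟨hmapQ', hlastQ'⟩ := route_eq_parts hQ'ne hne hQ'route
      have hQ'laste : (Q'.getLast hQ'ne).head = e.tail := hlastQ'.trans hlaste.1
      have heG : e ∈ G.edges := hp.2.1 e (by simp)
      set S : Set ℕ :=
        {n | ∃ f, f ∈ G.edges ∧ f.tail = e.tail ∧ f.head = e.head ∧ parr Q' ≤ f.dep ∧ f.arr = n}
        with hSdef
      have heS : e.arr ∈ S := ⟨e, heG, rfl, rfl, le_trans hQ'arr hparrp', rfl⟩
      obtain ⟨f, hfG, hft, hfh, hfd, hfa⟩ := Nat.sInf_mem (⟨_, heS⟩ : S.Nonempty)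
      have hfle : ∀ n ∈ S, f.arr ≤ n := fun n hn => hfa ▸ Nat.sInf_le hn
      have hQtrp : TRP G (Q' ++ [f]) := by
        refine ⟨by simp, ?_, ?_⟩
        · intro x hx
          rcases List.mem_append.mp hx with h | h
          · exact hQ'trp.2.1 x h
          · simp only [List.mem_singleton] at h; subst h; exact hfG
        · refine List.isChain_append.mpr ⟨hQ'trp.2.2, List.isChain_singleton f, ?_⟩
          intro x hx y hy
          rw [List.getLast?_eq_getLast hQ'ne, Option.mem_some_iff] at hx
          simp only [List.head?_cons, Option.mem_some_iff] at hy
          subst hx; subst hy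
          exact ⟨hQ'laste.trans hft.symm, le_trans (le_of_eq (parr_getLast Q' hQ'ne).symm) hfd⟩
      refine ⟨Q' ++ [f], hQtrp, ?_, ?_, ?_, ?_⟩
      · rw [routeOf_concat, routeOf_concat, hmapQ', hft, hfh]
      · rw [pdep_concat _ _ hQ'ne, pdep_concat _ _ hne, hQ'dep]
      · rw [parr_concat, parr_concat]; exact hfle _ heS
      · -- UsefulDom
        intro j hj1 hj2
        simp only [List.length_append, List.length_singleton] at hj2
        rcases lt_or_eq_of_le hj2 with hlt | heq
        · have hle : j ≤ Q'.length := Nat.lt_succ_iff.mp hlt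
          rw [List.take_append_of_le_length hle]
          exact hQ'use j hj1 hle
        · have : j = (Q' ++ [f]).length := by simpa using heq
          rw [this, List.take_length]
          -- DomSelf for the full path
          refine ⟨hQtrp, ?_⟩
          intro q hqtrp hqs hqr hqd
          obtain ⟨q'', g, rfl⟩ := (List.eq_nil_or_concat q).resolve_left hqtrp.1
          simp only [List.concat_eq_append] at *
          rw [routeOf_concat, routeOf_concat] at hqr
          have hq''ne : q'' ≠ [] := by
            intro hnil
            have := congrArg List.length hqr
            simp [hnil] at this
            exact hQ'ne this
          obtain ⟨hmapq, hpairs⟩ := List.append_inj' hqr (by simp)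
          have hgt : g.tail = f.tail := by simpa using congrArg List.head? hpairs
          have hgh : g.head = f.head := by
            have := congrArg (fun l => l.getLast?) hpairs
            simpa using this
          have hq''trp : TRP G q'' :=
            ⟨hq''ne, fun x hx => hqtrp.2.1 x (List.mem_append_left _ hx),
              (List.isChain_append.mp hqtrp.2.2).1⟩
          have hq''last : (q''.getLast hq''ne).head = g.tail ∧
              (q''.getLast hq''ne).arr ≤ g.dep := chain'_concat_rel hqtrp.2.2 hq''ne
          have hq''route : routeOf q'' = routeOf Q' := by
            rw [routeOf_ne q'' hq''ne, routeOf_ne Q' hQ'ne, hmapq]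
            congr 2
            rw [hq''last.1, hgt, hft, hQ'laste]
          have hq''start : startV q'' = startV Q' := by
            rw [startV_route, startV_route, hq''route]
          have hq''dep : pdep q'' = pdep Q' := by
            rw [pdep_concat _ _ hq''ne, pdep_concat _ _ hQ'ne] at hqd
            exact hqd
          have hQ'dom : DomSelf G Q' := by
            have := hQ'use Q'.length (List.length_pos_iff.mpr hQ'ne) le_rfl
            rwa [List.take_length] at this
          have harrle : parr Q' ≤ parr q'' :=
            hQ'dom.2 q'' hq''trp hq''start hq''route hq''dep
          have hgdep : parr Q' ≤ g.dep := by
            refine le_trans harrle ?_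
            rw [parr_getLast q'' hq''ne]
            exact hq''last.2
          have hgS : g.arr ∈ S :=
            ⟨g, hqtrp.2.1 g (by simp), by rw [hgt, hft], by rw [hgh, hfh], hgdep, rfl⟩
          rw [parr_concat, parr_concat]
          exact hfle _ hgS

theorem stmt0 (G : TGraph V) (s z : V) (r : List V) (t : ℕ)
    (h : ∃ P, P ∈ PathsIn G s z r t) :
    ∃ Q, Q ∈ PathsIn G s z r t ∧ UsefulDom G Q := by
  obtain ⟨P, hPtrp, hPs, hPz, hPr, hPt⟩ := h
  obtain ⟨Q, hQtrp, hQroute, hQdep, hQarr, hQuse⟩ := exists_useful G P hPtrp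
  refine ⟨Q, ⟨hQtrp, ?_, ?_, ?_, ?_⟩, hQuse⟩
  · rw [startV_route, hQroute, ← startV_route, hPs]
  · rw [endV_route, hQroute, ← endV_route, hPz]
  · rw [hQroute, hPr]
  · rw [hQdep, hPt]
end

section
/- Let G be a temporal graph, s a vertex, rt a ready time, and z ≠ s a vertex. The earliest arrival time from s to z with ready time rt equals the minimum of arr(v_e) over all nodes v_e of the ESDG G̃ such that the head of e is z and v_e is reachable in G̃ from some node v_f with tail(f) = s and dep(v_f) ≥ rt (and equals ∞ if no such node exists). -/
variable {V : Type}

lemma key1 (G : TGraph V) (p : List (TEdge V)) (hp : TRP G p) :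
    ∃ f e : TEdge V, f ∈ G.edges ∧ e ∈ G.edges ∧
      startV p = some f.tail ∧ pdep p = f.dep ∧
      Relation.ReflTransGen (ESDGAdj G) f e ∧ endV p = some e.head ∧ e.arr ≤ parr p := by
  induction p using List.reverseRecOn with
  | nil => exact absurd rfl hp.1
  | append_singleton p a ih =>
    have hamem : a ∈ G.edges := hp.2.1 a (by simp)
    rcases eq_or_ne p [] with rfl | hne
    · exact ⟨a, a, hamem, hamem, rfl, rfl, Relation.ReflTransGen.refl, rfl, le_rfl⟩
    have hch := List.isChain_append.mp hp.2.2
    obtain ⟨f, e, hfm, hem, hst, hdep, hrtg, hend, harr⟩ :=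
      ih ⟨hne, fun e he => hp.2.1 e (List.mem_append_left _ he), hch.1⟩
    set l := p.getLast hne with hldef
    have hl : p.getLast? = some l := List.getLast?_eq_getLast hne
    have hla : l.head = a.tail ∧ l.arr ≤ a.dep := hch.2.2 l (by rw [hl]; rfl) a rfl
    have hendl : endV p = some l.head := by simp [endV, hl]
    have hehead : e.head = a.tail := by
      rw [hendl] at hend
      have := Option.some.inj hend
      rw [← this, hla.1]
    have hparr : parr p = l.arr := by simp [parr, hl]
    have hedep : e.arr ≤ a.dep := by
      rw [hparr] at harr; exact harr.trans hla.2
    -- choose the parallel edge with minimal arrival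
    set S : Set ℕ := {n | ∃ g, g ∈ G.edges ∧ g.tail = a.tail ∧ g.head = a.head ∧
      e.arr ≤ g.dep ∧ g.arr = n} with hSdef
    have haS : a.arr ∈ S := ⟨a, hamem, rfl, rfl, hedep, rfl⟩
    obtain ⟨g, hgm, hgt, hgh, hgd, hga⟩ := Nat.sInf_mem ⟨a.arr, haS⟩
    have hgle : g.arr ≤ a.arr := hga ▸ Nat.sInf_le haS
    have hadj : ESDGAdj G e g := by
      refine ⟨hem, hgm, by rw [hehead, hgt], hgd, ?_⟩
      rintro ⟨g', hg'm, hg't, hg'h, hg'd, hg'a⟩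
      have : g'.arr ∈ S := ⟨g', hg'm, hg't.trans hgt, hg'h.trans hgh, hg'd, rfl⟩
      exact absurd (Nat.sInf_le this) (by omega)
    refine ⟨f, g, hfm, hgm, ?_, ?_, hrtg.tail hadj, ?_, ?_⟩
    · rw [← hst]; simp [startV, List.head?_append, List.head?_eq_head hne]
    · rw [← hdep]; simp [pdep, List.head?_append, List.head?_eq_head hne]
    · simp [endV, hgh]
    · simpa [parr] using hgle

lemma key2 (G : TGraph V) (f : TEdge V) (hf : f ∈ G.edges) (e : TEdge V)
    (h : Relation.ReflTransGen (ESDGAdj G) f e) :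
    ∃ p, TRP G p ∧ startV p = some f.tail ∧ pdep p = f.dep ∧
      endV p = some e.head ∧ parr p = e.arr := by
  induction h with
  | refl =>
    exact ⟨[f], ⟨by simp, by simpa using hf, List.isChain_singleton f⟩, rfl, rfl, rfl, rfl⟩
  | @tail b c hfb hbc ih =>
    obtain ⟨p, htrp, hst, hdep, hend, harr⟩ := ih
    have hne : p ≠ [] := htrp.1
    set l := p.getLast hne with hldef
    have hl : p.getLast? = some l := List.getLast?_eq_getLast hne
    have hlh : l.head = b.head := by
      have : endV p = some l.head := by simp [endV, hl]
      rw [this] at hend; exact Option.some.inj hend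
    have hla : l.arr = b.arr := by
      have : parr p = l.arr := by simp [parr, hl]
      rw [this] at harr; exact harr
    refine ⟨p ++ [c], ⟨by simp, ?_, ?_⟩, ?_, ?_, ?_, ?_⟩
    · intro x hx
      rcases List.mem_append.mp hx with h | h
      · exact htrp.2.1 x h
      · simp at h; exact h ▸ hbc.2.1
    · refine List.isChain_append.mpr ⟨htrp.2.2, List.isChain_singleton c, ?_⟩
      intro x hx y hy
      simp at hy
      rw [hl] at hx
      have hx' : x = l := by simpa using hx.symm
      subst hx' hy
      exact ⟨hlh.trans hbc.2.2.1, hla ▸ hbc.2.2.2.1⟩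
    · rw [← hst]; simp [startV, List.head?_append, List.head?_eq_head hne]
    · rw [← hdep]; simp [pdep, List.head?_append, List.head?_eq_head hne]
    · simp [endV]
    · simp [parr]

theorem stmt9 (G : TGraph V) (s z : V) (rt : ℕ) (hz : z ≠ s) :
    sInf {a : ℕ∞ | ∃ p, TRP G p ∧ startV p = some s ∧ endV p = some z ∧
        rt ≤ pdep p ∧ a = (parr p : ℕ∞)} =
    sInf {a : ℕ∞ | ∃ e f : TEdge V, f ∈ G.edges ∧ f.tail = s ∧ rt ≤ f.dep ∧
        Relation.ReflTransGen (ESDGAdj G) f e ∧ e.head = z ∧ a = (e.arr : ℕ∞)} := by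
  apply le_antisymm
  · refine le_sInf ?_
    rintro b ⟨e, f, hfm, hft, hrt, hrtg, hez, rfl⟩
    obtain ⟨p, htrp, hst, hdep, hend, harr⟩ := key2 G f hfm e hrtg
    refine sInf_le_of_le (b := (parr p : ℕ∞)) ⟨p, htrp, by rw [hst, hft],
      by rw [hend, hez], by rw [hdep]; exact hrt, rfl⟩ ?_
    rw [harr]
  · refine le_sInf ?_
    rintro b ⟨p, htrp, hst, hend, hrt, rfl⟩
    obtain ⟨f, e, hfm, hem, hst', hdep, hrtg, hend', harr⟩ := key1 G p htrp
    have hft : f.tail = s := by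
      rw [hst] at hst'; exact (Option.some.inj hst').symm
    have hez : e.head = z := by
      rw [hend] at hend'; exact (Option.some.inj hend').symm
    refine sInf_le_of_le (b := (e.arr : ℕ∞))
      ⟨e, f, hfm, hft, hdep ▸ hrt, hrtg, hez, rfl⟩ ?_
    exact_mod_cast harr
end

section
/- Let G be a temporal graph, s a vertex, and z ≠ s a vertex. The fastest path duration from s to z equals the minimum, over all pairs of nodes (v_f, v_e) of the ESDG G̃ with tail(f) = s, head(e) = z, and v_e reachable from v_f in G̃, of arr(v_e) − dep(v_f) (and equals ∞ if no such pair exists). -/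
variable {V : Type}

lemma aux_key (G : TGraph V) : ∀ (p : List (TEdge V)) (f : TEdge V), f ∈ G.edges →
    (∀ e ∈ p, e ∈ G.edges) →
    List.Chain' (fun e f => e.head = f.tail ∧ e.arr ≤ f.dep) (f :: p) →
    ∃ e, Relation.ReflTransGen (ESDGAdj G) f e ∧
      some e.head = endV (f :: p) ∧ e.arr ≤ parr (f :: p) := by
  intro p
  induction p with
  | nil =>
    intro f hf _ _
    exact ⟨f, .refl, by simp [endV], by simp [parr]⟩
  | cons g rest ih =>
    intro f hf hmem hch
    simp only [List.Chain'] at hch; rw [List.isChain_cons_cons] at hch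
    obtain ⟨⟨hfg1, hfg2⟩, hch'⟩ := hch
    have hgE : g ∈ G.edges := hmem g (by simp)
    set S : Set ℕ := {a | ∃ g', g' ∈ G.edges ∧ g'.tail = g.tail ∧ g'.head = g.head ∧
      f.arr ≤ g'.dep ∧ g'.arr = a} with hS
    have hgS : g.arr ∈ S := ⟨g, hgE, rfl, rfl, hfg2, rfl⟩
    obtain ⟨g', hg'E, ht, hh, hd, ha⟩ := Nat.sInf_mem (Set.nonempty_of_mem hgS)
    have hle : g'.arr ≤ g.arr := ha ▸ Nat.sInf_le hgS
    have hadj : ESDGAdj G f g' := by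
      refine ⟨hf, hg'E, hfg1.trans ht.symm, hd, ?_⟩
      rintro ⟨g'', hE'', ht'', hh'', hd'', hlt''⟩
      have : g''.arr ∈ S := ⟨g'', hE'', ht''.trans ht, hh''.trans hh, hd'', rfl⟩
      exact absurd (Nat.sInf_le this) (by omega)
    have hmem' : ∀ e ∈ rest, e ∈ G.edges := fun e he => hmem e (by simp [he])
    have hch'' : List.Chain' (fun e f => e.head = f.tail ∧ e.arr ≤ f.dep) (g' :: rest) := by
      cases rest with
      | nil => exact List.isChain_singleton _
      | cons h t =>
        simp only [List.Chain'] at ⊢; rw [List.isChain_cons_cons] at hch' ⊢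
        exact ⟨⟨hh.trans hch'.1.1, le_trans hle hch'.1.2⟩, hch'.2⟩
    obtain ⟨e, he1, he2, he3⟩ := ih g' hg'E hmem' hch''
    refine ⟨e, .head hadj he1, ?_, ?_⟩
    · cases rest with
      | nil => simpa [endV, hh] using he2
      | cons h t => simpa [endV, List.getLast?_cons_cons] using he2
    · cases rest with
      | nil => simp only [parr, List.getLast?_cons_cons] at he3 ⊢; simp at he3 ⊢; omega
      | cons h t => simpa [parr, List.getLast?_cons_cons] using he3

lemma aux_build (G : TGraph V) {f e : TEdge V} (hf : f ∈ G.edges)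
    (h : Relation.ReflTransGen (ESDGAdj G) f e) :
    ∃ p, TRP G p ∧ startV p = some f.tail ∧ endV p = some e.head ∧
      pdep p = f.dep ∧ parr p = e.arr := by
  induction h with
  | refl =>
    exact ⟨[f], ⟨by simp, by simpa, List.isChain_singleton _⟩, by simp [startV],
      by simp [endV], by simp [pdep], by simp [parr]⟩
  | @tail b c hab hbc ih =>
    obtain ⟨p, ⟨hne, hmem, hch⟩, hs, hE, hD, hA⟩ := ih
    obtain ⟨ℓ, hℓ⟩ : ∃ ℓ, p.getLast? = some ℓ := by
      cases hq : p.getLast? with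
      | none => exact absurd (List.getLast?_eq_none_iff.1 hq) hne
      | some x => exact ⟨x, rfl⟩
    have hℓh : ℓ.head = b.head := by
      simp [endV, hℓ] at hE; exact hE
    have hℓa : ℓ.arr = b.arr := by
      simp [parr, hℓ] at hA; exact hA
    refine ⟨p ++ [c], ⟨by simp, ?_, ?_⟩, ?_, ?_, ?_, ?_⟩
    · intro x hx
      rcases List.mem_append.1 hx with h1 | h1
      · exact hmem x h1
      · simp at h1; subst h1; exact hbc.2.1
    · simp only [List.Chain']; rw [List.isChain_append]
      refine ⟨hch, by simp, ?_⟩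
      intro x hx y hy
      simp [hℓ] at hx
      simp at hy
      subst hx; subst hy
      exact ⟨hℓh.trans hbc.2.2.1, hℓa ▸ hbc.2.2.2.1⟩
    · rw [startV, List.head?_append_of_ne_nil _ hne] at *
      exact hs
    · simp [endV]
    · rw [pdep, List.head?_append_of_ne_nil _ hne] at *
      exact hD
    · simp [parr]


theorem stmt10 (G : TGraph V) (s z : V) (hz : z ≠ s) :
    sInf {a : ℕ∞ | ∃ p, TRP G p ∧ startV p = some s ∧ endV p = some z ∧
        a = ((parr p - pdep p : ℕ) : ℕ∞)} =
    sInf {a : ℕ∞ | ∃ f e : TEdge V, f ∈ G.edges ∧ f.tail = s ∧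
        Relation.ReflTransGen (ESDGAdj G) f e ∧ e.head = z ∧
        a = ((e.arr - f.dep : ℕ) : ℕ∞)} := by
  apply le_antisymm
  · apply le_sInf
    rintro a ⟨f, e, hfE, hft, hrel, heh, rfl⟩
    obtain ⟨p, hTRP, hs, hE, hD, hA⟩ := aux_build G hfE hrel
    exact sInf_le ⟨p, hTRP, by rw [hs, hft], by rw [hE, heh], by rw [hD, hA]⟩
  · apply le_sInf
    rintro a ⟨p, ⟨hne, hmem, hch⟩, hs, hE, rfl⟩
    cases p with
    | nil => exact absurd rfl hne
    | cons f rest =>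
      obtain ⟨e, h1, h2, h3⟩ := aux_key G rest f (hmem f (by simp))
        (fun x hx => hmem x (by simp [hx])) hch
      have hft : f.tail = s := by simpa [startV] using hs
      have heh : e.head = z := by rw [hE] at h2; exact Option.some_injective _ h2
      refine le_trans (sInf_le ⟨f, e, hmem f (by simp), hft, h1, heh, rfl⟩) ?_
      have hD : pdep (f :: rest) = f.dep := by simp [pdep]
      have : e.arr - f.dep ≤ parr (f :: rest) - pdep (f :: rest) := by omega
      exact_mod_cast this
end

section
/- Let G be a temporal graph, s a vertex, and suppose a fastest path P from s to z exists. Then there exist nodes x and y in the ESDG G̃ with tail(x) = s, head(y) = z, y reachable from x, dep(x) = dep(P), and arr(y) = arr(P); moreover the fastest path duration from s to z equals arr(y) − dep(x). -/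
variable {V : Type}

/-- Last edge of a nonempty path given as head plus tail list. -/
def last1 (e : TEdge V) : List (TEdge V) → TEdge V
  | [] => e
  | f :: l => last1 f l

lemma parr_eq : ∀ (p : List (TEdge V)) (e : TEdge V), parr (e :: p) = (last1 e p).arr
  | [], e => by simp [parr, last1]
  | f :: l, e => by
      simpa [parr, last1, List.getLast?_cons_cons] using parr_eq l f

lemma endV_eq : ∀ (p : List (TEdge V)) (e : TEdge V), endV (e :: p) = some (last1 e p).head
  | [], e => by simp [endV, last1]
  | f :: l, e => by
      simpa [endV, last1, List.getLast?_cons_cons] using endV_eq l f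

lemma reach_last1 (r : TEdge V → TEdge V → Prop) :
    ∀ (p : List (TEdge V)) (e : TEdge V), List.Chain r e p →
      Relation.ReflTransGen r e (last1 e p)
  | [], e, _ => Relation.ReflTransGen.refl
  | f :: l, e, h => by
      unfold List.Chain at h
      rw [List.chain_cons] at h
      exact Relation.ReflTransGen.head h.1 (reach_last1 r l f h.2)

lemma arr_mono (G : TGraph V) :
    ∀ (p : List (TEdge V)) (e : TEdge V), (∀ g ∈ p, g ∈ G.edges) →
      List.Chain (fun a b => a.head = b.tail ∧ a.arr ≤ b.dep) e p →
      e.arr ≤ (last1 e p).arr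
  | [], e, _, _ => le_refl _
  | f :: l, e, hed, h => by
      unfold List.Chain at h
      rw [List.chain_cons] at h
      have hf : f ∈ G.edges := hed f (by simp)
      have h1 : e.arr ≤ f.arr :=
        le_trans h.1.2 (le_of_lt (G.valid f hf))
      exact le_trans h1 (arr_mono G l f (fun g hg => hed g (by simp [hg])) h.2)

lemma key_esdg (G : TGraph V) :
    ∀ (p : List (TEdge V)) (e : TEdge V), TRP G (e :: p) →
      ∃ q : List (TEdge V), List.Chain (ESDGAdj G) e q ∧ (∀ g ∈ q, g ∈ G.edges) ∧
        (last1 e q).head = (last1 e p).head ∧ (last1 e q).arr ≤ (last1 e p).arr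
  | [], e, _ => ⟨[], List.Chain.nil, by simp, rfl, le_refl _⟩
  | f :: rest, e, hTRP => by
      obtain ⟨-, hed, hch⟩ := hTRP
      have hch' : List.Chain (fun a b => a.head = b.tail ∧ a.arr ≤ b.dep) e (f :: rest) := hch
      unfold List.Chain at hch'
      rw [List.chain_cons] at hch'
      have he : e ∈ G.edges := hed e (by simp)
      have hf : f ∈ G.edges := hed f (by simp)
      -- minimal-arrival replacement of f
      set A : Set ℕ := {n | ∃ g : TEdge V, g ∈ G.edges ∧ g.tail = f.tail ∧ g.head = f.head ∧
        e.arr ≤ g.dep ∧ g.arr = n} with hA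
      have hAne : A.Nonempty := ⟨f.arr, f, hf, rfl, rfl, hch'.1.2, rfl⟩
      obtain ⟨f', hf'e, hf't, hf'h, hf'd, hf'a⟩ := Nat.sInf_mem hAne
      have hmin : ∀ g : TEdge V, g ∈ G.edges → g.tail = f.tail → g.head = f.head →
          e.arr ≤ g.dep → f'.arr ≤ g.arr := by
        intro g h1 h2 h3 h4
        rw [hf'a]
        exact Nat.sInf_le ⟨g, h1, h2, h3, h4, rfl⟩
      have hf'f : f'.arr ≤ f.arr := hmin f hf rfl rfl hch'.1.2
      have hadj : ESDGAdj G e f' := by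
        refine ⟨he, hf'e, hch'.1.1.trans hf't.symm, hf'd, ?_⟩
        rintro ⟨g, hg, hgt, hgh, hgd, hga⟩
        exact absurd (hmin g hg (hgt.trans hf't) (hgh.trans hf'h) hgd) (not_le.mpr hga)
      -- f' :: rest is a TRP
      have hTRP' : TRP G (f' :: rest) := by
        refine ⟨by simp, ?_, ?_⟩
        · intro g hg
          rcases List.mem_cons.mp hg with h | h
          · exact h ▸ hf'e
          · exact hed g (by simp [h])
        · show List.Chain _ f' rest
          cases rest with
          | nil => exact List.Chain.nil
          | cons r rs =>
              unfold List.Chain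
              rw [List.chain_cons] at hch' ⊢
              refine ⟨⟨hf'h.trans hch'.2.1.1, le_trans hf'f hch'.2.1.2⟩, hch'.2.2⟩
      obtain ⟨q', hq'ch, hq'ed, hq'h, hq'a⟩ := key_esdg G rest f' hTRP'
      refine ⟨f' :: q', List.chain_cons.mpr ⟨hadj, hq'ch⟩, ?_, ?_, ?_⟩
      · intro g hg
        rcases List.mem_cons.mp hg with h | h
        · exact h ▸ hf'e
        · exact hq'ed g h
      · show (last1 f' q').head = (last1 f rest).head
        cases rest with
        | nil => simpa [last1] using hq'h.trans hf'h
        | cons r rs => simpa [last1] using hq'h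
      · show (last1 f' q').arr ≤ (last1 f rest).arr
        cases rest with
        | nil => simpa [last1] using hq'a.trans hf'f
        | cons r rs => simpa [last1] using hq'a

theorem stmt18 (G : TGraph V) (s z : V) (P : List (TEdge V))
    (hP : FastestPath G s z P) :
    ∃ x y : TEdge V, x ∈ G.edges ∧ x.tail = s ∧ y.head = z ∧
      Relation.ReflTransGen (ESDGAdj G) x y ∧ x.dep = pdep P ∧ y.arr = parr P ∧
      y.arr - x.dep = parr P - pdep P := by
  obtain ⟨hTRP, hs, hz, hfast⟩ := hP
  obtain ⟨hne, hed, hch⟩ := hTRP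
  obtain ⟨e, p, rfl⟩ := List.exists_cons_of_ne_nil hne
  have he : e ∈ G.edges := hed e (by simp)
  have hst : e.tail = s := by
    simpa [startV] using hs
  have hend : (last1 e p).head = z := by
    rw [endV_eq] at hz
    simpa using hz
  obtain ⟨q, hqch, hqed, hqh, hqa⟩ := key_esdg G p e ⟨hne, hed, hch⟩
  have hedq : ∀ g ∈ e :: q, g ∈ G.edges := by
    intro g hg
    rcases List.mem_cons.mp hg with h | h
    · exact h ▸ he
    · exact hqed g h
  have hchq : List.Chain (fun a b => a.head = b.tail ∧ a.arr ≤ b.dep) e q :=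
    List.IsChain.imp (fun ⦃a b⦄ hab => ⟨hab.2.2.1, hab.2.2.2.1⟩) hqch
  have hTRPq : TRP G (e :: q) := ⟨by simp, hedq, hchq⟩
  have hq_arr_lb : e.arr ≤ (last1 e q).arr :=
    arr_mono G q e (fun g hg => hedq g (by simp [hg])) hchq
  have hd : e.dep < e.arr := G.valid e he
  have hfq := hfast (e :: q) hTRPq (by simpa [startV] using hst)
    (by rw [endV_eq]; simpa using hqh.symm ▸ hend)
  have hdep : pdep (e :: p) = e.dep := by simp [pdep]
  have harr : (last1 e q).arr = parr (e :: p) := by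
    rw [parr_eq p e]
    rw [parr_eq q e, parr_eq p e, hdep] at hfq
    simp only [pdep, List.head?_cons, Option.elim] at hfq
    omega
  exact ⟨e, last1 e q, he, hst, hqh.symm ▸ hend, reach_last1 _ q e hqch,
    hdep.symm, harr, by rw [harr, hdep]⟩
end

section
/- In a temporal graph G, if P is a dominating path in ℙ(s,z,r,t) and P' is its prefix on the first j edges, then replacing P' by any useful dominating path Q in ℙ(s, u_{j+1}, r', t) on the same route r' as P' yields a time-respecting path from s to z through r departing at t that is still dominating in ℙ(s,z,r,t). -/
variable {V : Type}

section AuxStmt19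
variable {V : Type}

lemma endV_elim19 (p : List (TEdge V)) :
    p.getLast?.elim ([] : List V) (fun e => [e.head]) = (endV p).elim [] (fun h => [h]) := by
  cases h : p.getLast? <;> simp [endV, h]

lemma routeOf_eq_of_eq19 {p q : List (TEdge V)}
    (h1 : p.map TEdge.tail = q.map TEdge.tail) (h2 : endV p = endV q) :
    routeOf p = routeOf q := by
  unfold routeOf
  rw [h1, endV_elim19, endV_elim19, h2]

lemma getLast?_of_endV19 {p : List (TEdge V)} {w : V} (h : endV p = some w) :
    ∃ e, p.getLast? = some e ∧ e.head = w := by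
  unfold endV at h
  cases hl : p.getLast? with
  | none => rw [hl] at h; simp at h
  | some e => rw [hl] at h; simp at h; exact ⟨e, rfl, h⟩

end AuxStmt19

theorem stmt19 (G : TGraph V) (s z : V) (r : List V) (t : ℕ)
    (P : List (TEdge V)) (hP : DominatingIn G s z r t P)
    (j : ℕ) (hj1 : 1 ≤ j) (hj2 : j ≤ P.length)
    (z' : V) (hz' : endV (P.take j) = some z')
    (Q : List (TEdge V))
    (hQ : Q ∈ PathsIn G s z' (routeOf (P.take j)) t)
    (hQU : UsefulDom G Q) :
    (Q ++ P.drop j) ∈ PathsIn G s z r t ∧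
      DominatingIn G s z r t (Q ++ P.drop j) := by
  obtain ⟨⟨⟨hPne, hPmem, hPch⟩, hPs, hPe, hPr, hPd⟩, hPdom⟩ := hP
  obtain ⟨⟨hQne, hQmem, hQch⟩, hQs, hQe, hQr, hQd⟩ := hQ
  set P' := P.take j with hP'def
  set D := P.drop j with hDdef
  have hPD : P' ++ D = P := List.take_append_drop j P
  have hPlen : 0 < P.length := List.length_pos_iff.mpr hPne
  have hP'ne : P' ≠ [] := by
    intro h
    have hl : (P.take j).length = min j P.length := List.length_take
    rw [← hP'def, h] at hl
    simp at hl
    omega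
  -- last edges
  obtain ⟨qe, hqe1, hqe2⟩ := getLast?_of_endV19 hQe
  obtain ⟨pe, hpe1, hpe2⟩ := getLast?_of_endV19 hz'
  -- tails equality
  have htails : Q.map TEdge.tail = P'.map TEdge.tail := by
    have h1 : routeOf Q = Q.map TEdge.tail ++ [z'] := by
      unfold routeOf; rw [hqe1]; simp [hqe2]
    have h2 : routeOf P' = P'.map TEdge.tail ++ [z'] := by
      unfold routeOf; rw [hpe1]; simp [hpe2]
    have h3 := hQr
    rw [h1, h2] at h3
    exact List.append_cancel_right h3
  -- P' is a TRP
  have hP'trp : TRP G P' :=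
    ⟨hP'ne, fun e he => hPmem e (List.take_subset _ _ he), hPch.take j⟩
  -- startV of P' equals startV of Q
  have hstart : startV P' = startV Q := by
    unfold startV
    rw [← List.head?_map, ← List.head?_map, htails]
  -- pdep of P'
  obtain ⟨a, l, hcons⟩ := List.exists_cons_of_ne_nil hP'ne
  have hheadP : P.head? = P'.head? := by
    rw [← hPD, List.head?_append, hcons]; rfl
  have hpdepP' : pdep P' = t := by
    unfold pdep at hPd ⊢
    rw [← hheadP]; exact hPd
  -- Q dominates P'
  have hQlen : 1 ≤ Q.length := List.length_pos_iff.mpr hQne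
  have hdom := hQU Q.length hQlen le_rfl
  rw [List.take_length] at hdom
  have hQle : parr Q ≤ parr P' :=
    hdom.2 P' hP'trp hstart hQr.symm (hpdepP'.trans hQd.symm)
  -- junction condition in P
  have hjun : ∀ x ∈ P'.getLast?, ∀ y ∈ D.head?, x.head = y.tail ∧ x.arr ≤ y.dep := by
    have hc := hPch
    rw [← hPD] at hc
    exact (List.isChain_append.mp hc).2.2
  have hQarr : parr Q = qe.arr := by unfold parr; rw [hqe1]; rfl
  have hP'arr : parr P' = pe.arr := by unfold parr; rw [hpe1]; rfl
  -- chain of Q ++ D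
  have hchQD : List.Chain' (fun e f => e.head = f.tail ∧ e.arr ≤ f.dep) (Q ++ D) := by
    refine List.isChain_append.mpr ⟨hQch, hPch.drop j, ?_⟩
    intro x hx y hy
    rw [Option.mem_def, hqe1, Option.some_inj] at hx
    subst hx
    have hj := hjun pe (by rw [Option.mem_def, hpe1]) y hy
    constructor
    · rw [hqe2, ← hpe2]; exact hj.1
    · calc qe.arr = parr Q := hQarr.symm
        _ ≤ parr P' := hQle
        _ = pe.arr := hP'arr
        _ ≤ y.dep := hj.2
  have hQDtrp : TRP G (Q ++ D) := by
    refine ⟨by simp [hQne], ?_, hchQD⟩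
    intro e he
    rcases List.mem_append.mp he with h | h
    · exact hQmem e h
    · exact hPmem e (List.drop_subset _ _ h)
  -- head of Q ++ D
  obtain ⟨b, m, hQcons⟩ := List.exists_cons_of_ne_nil hQne
  have hheadQD : (Q ++ D).head? = Q.head? := by
    rw [List.head?_append, hQcons]; rfl
  have hsQD : startV (Q ++ D) = some s := by
    unfold startV; rw [hheadQD]; exact hQs
  have hdQD : pdep (Q ++ D) = t := by
    unfold pdep at hQd ⊢; rw [hheadQD]; exact hQd
  -- endV and parr
  have hendV : endV (Q ++ D) = some z ∧ parr (Q ++ D) ≤ parr P := by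
    cases hDc : D with
    | nil =>
      have hP'P : P' = P := by rw [← hPD, hDc, List.append_nil]
      rw [List.append_nil]
      constructor
      · have hz'z : z' = z := by
          rw [hP'P, hPe] at hz'
          exact (Option.some_inj.mp hz').symm
        rw [hQe, hz'z]
      · rw [← hP'P]; exact hQle
    | cons d ds =>
      rw [← hDc]
      have hDne : D ≠ [] := by rw [hDc]; simp
      obtain ⟨de, hde⟩ := Option.isSome_iff_exists.mp (List.getLast?_isSome.mpr hDne)
      have hglQD : (Q ++ D).getLast? = some de := by
        rw [List.getLast?_append, hde]; rfl
      have hglP : P.getLast? = some de := by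
        rw [← hPD, List.getLast?_append, hde]; rfl
      constructor
      · unfold endV at hPe ⊢
        rw [hglQD, ← hglP]; exact hPe
      · unfold parr
        rw [hglQD, ← hglP]
  -- route of Q ++ D
  have hroute : routeOf (Q ++ D) = r := by
    have h1 : (Q ++ D).map TEdge.tail = P.map TEdge.tail := by
      rw [List.map_append, htails, ← List.map_append, hPD]
    have h2 : endV (Q ++ D) = endV P := by rw [hendV.1, hPe]
    rw [routeOf_eq_of_eq19 h1 h2, hPr]
  have hmem : (Q ++ D) ∈ PathsIn G s z r t := ⟨hQDtrp, hsQD, hendV.1, hroute, hdQD⟩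
  exact ⟨hmem, hmem, fun q hq => le_trans hendV.2 (hPdom q hq)⟩
end
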